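/- Let p be a binary predicate, let a, b be distinct constants, let 𝓡 = {p(x,y) → ∃z (p(y,z) ∧ p(z,y))}, and let F = {p(a,b)}. Then every exhaustive SO-chase derivation from F and 𝓡 is infinite; in particular, 𝓡 is not SO-k-bounded for any k ∈ ℕ. -/

import Mathlib

/-! # A framework for existential rules and the chase

Terms are constants, ordinary variables, or *nulls* (fresh existential variables).
The null `XTerm.null bodyEnc headEnc z key` is the fresh variable `z_{(R,π)}`
canonically determined by the trigger `(R,π)` (encoded by the rule's body and head
and by the restriction of `π` to the terms of the body) and by the existential
variable `z` of the head. -/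

inductive XTerm : Type
  | const : ℕ → XTerm
  | var : ℕ → XTerm
  | null : List (ℕ × List XTerm) → List (ℕ × List XTerm) → XTerm →
      List (XTerm × XTerm) → XTerm

/-- variables (including nulls) are the non-constant terms -/
def XTerm.isVar : XTerm → Prop
  | .const _ => False
  | _ => True

/-- an atom: a predicate together with its list of arguments -/
structure XAtom where
  pred : ℕ
  args : List XTerm

/-- an existential rule, given by its (finite) body and head -/
structure XRule where
  body : List XAtom
  head : List XAtom

/-- a trigger `(R,π)` -/
structure Trigger where
  rule : XRule
  π : XTerm → XTerm

def applyAtom (σ : XTerm → XTerm) (a : XAtom) : XAtom := ⟨a.pred, a.args.map σ⟩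

def applySet (σ : XTerm → XTerm) (S : Set XAtom) : Set XAtom := applyAtom σ '' S

/-- a substitution leaves constants unchanged -/
def constPreserving (σ : XTerm → XTerm) : Prop :=
  ∀ c, σ (XTerm.const c) = XTerm.const c

/-- `σ` is a homomorphism from the set of atoms `A` to the set of atoms `B` -/
def isHom (σ : XTerm → XTerm) (A B : Set XAtom) : Prop :=
  constPreserving σ ∧ applySet σ A ⊆ B

/-- the variables occurring in a finite set (list) of atoms -/
def listVars (l : List XAtom) : Set XTerm := {t | t.isVar ∧ ∃ a ∈ l, t ∈ a.args}

def XRule.bodySet (R : XRule) : Set XAtom := {a | a ∈ R.body}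
def XRule.headSet (R : XRule) : Set XAtom := {a | a ∈ R.head}

/-- the frontier of a rule: the variables shared by its body and head -/
def XRule.frontier (R : XRule) : Set XTerm := listVars R.body ∩ listVars R.head

/-- the existential variables of a rule: variables of the head not in the body -/
def XRule.existVars (R : XRule) : Set XTerm := listVars R.head \ listVars R.body

/-- canonical encoding of the relevant part of a trigger's substitution -/
def trigKey (R : XRule) (π : XTerm → XTerm) : List (XTerm × XTerm) :=
  (R.body.flatMap XAtom.args).map (fun t => (t, π t))

open Classical in
/-- the safe extension `π^s` of `π`: it maps each existential variable `z` of the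
head to the fresh variable `z_{(R,π)}` determined by the trigger, and is `π`
elsewhere -/
noncomputable def safeExt (R : XRule) (π : XTerm → XTerm) : XTerm → XTerm := fun t =>
  if t ∈ R.existVars then
    XTerm.null (R.body.map fun a => (a.pred, a.args))
      (R.head.map fun a => (a.pred, a.args)) t (trigKey R π)
  else π t

/-- two triggers are the same when they have the same rule and their substitutions
agree on the body (the domain of the substitution of a trigger) -/
def TrigEquiv (T T' : Trigger) : Prop :=
  T.rule = T'.rule ∧ ∀ t ∈ T.rule.body.flatMap XAtom.args, T.π t = T'.π t

/-- A (possibly infinite) derivation `D₀ = (∅,∅,F₀), D₁ = (R₁,π₁,F₁), …` from a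
factbase `F` and a ruleset `𝓡`:  `tr i` is the trigger of the element `Dᵢ`
(defined for `1 ≤ i ≤` length) and `facts i` is its factbase `Fᵢ`; each `Fᵢ`
(`i ≥ 1`) is the immediate derivation from `Fᵢ₋₁` through `(Rᵢ,πᵢ)`, and all the
triggers are pairwise distinct. -/
structure ChaseDerivation (𝓡 : Set XRule) (F : Set XAtom) where
  tr : ℕ → Option Trigger
  facts : ℕ → Set XAtom
  tr_zero : tr 0 = none
  facts_zero : facts 0 = F
  step_some : ∀ i T, tr (i+1) = some T →
    T.rule ∈ 𝓡 ∧ isHom T.π T.rule.bodySet (facts i) ∧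
    facts (i+1) = facts i ∪ applySet (safeExt T.rule T.π) T.rule.headSet
  step_none : ∀ i, tr (i+1) = none → facts (i+1) = facts i
  closed : ∀ i, tr (i+2) ≠ none → tr (i+1) ≠ none
  distinct : ∀ i j T T', tr i = some T → tr j = some T' → i ≠ j → ¬ TrigEquiv T T'

namespace Chase

variable {𝓡 : Set XRule} {F G : Set XAtom}

/-- the set of atoms produced by the `i`-th element of the derivation -/
noncomputable def producedAt (D : ChaseDerivation 𝓡 F) (i : ℕ) : Set XAtom :=
  match D.tr i with
  | some T => applySet (safeExt T.rule T.π) T.rule.headSet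
  | none => ∅

def listMax (l : List ℕ) : ℕ := l.foldr max 0

open Classical in
noncomputable def rankStep (D : ChaseDerivation 𝓡 F) (prev : XAtom → ℕ) (A : XAtom) : ℕ :=
  if A ∈ D.facts 0 then 0
  else if h : ∃ i, A ∈ producedAt D i then
    match D.tr (Nat.find h) with
    | some T => 1 + listMax ((T.rule.body.map (applyAtom T.π)).map prev)
    | none => 0
  else 0

noncomputable def rankFuel (D : ChaseDerivation 𝓡 F) : ℕ → XAtom → ℕ
  | 0 => fun _ => 0
  | n+1 => rankStep D (rankFuel D n)

open Classical in
/-- the index of the first trigger of the derivation producing a given atom -/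
noncomputable def firstProd (D : ChaseDerivation 𝓡 F) (A : XAtom) : ℕ :=
  if h : ∃ i, A ∈ producedAt D i then Nat.find h else 0

/-- the rank of an atom in a derivation: `0` for the atoms of `F₀`, and otherwise
`1 +` the maximal rank of the atoms of `π(B)`, where `(R,π)` (with `R = (B,H)`)
is the first trigger of the derivation such that `A ∈ π^s(H)` -/
noncomputable def rank (D : ChaseDerivation 𝓡 F) (A : XAtom) : ℕ :=
  rankFuel D (firstProd D A + 1) A

/-- the rank of a trigger `(R,π)`: `1 +` the maximal rank of the atoms of `π(B)` -/
noncomputable def trigRank (D : ChaseDerivation 𝓡 F) (T : Trigger) : ℕ :=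
  1 + listMax ((T.rule.body.map (applyAtom T.π)).map (rank D))

/-- all atoms appearing in a derivation -/
def allAtoms (D : ChaseDerivation 𝓡 F) : Set XAtom := ⋃ i, D.facts i

/-- the derivation has depth (maximal rank of an atom) at most `k` -/
def depthAtMost (D : ChaseDerivation 𝓡 F) (k : ℕ) : Prop :=
  ∀ A ∈ allAtoms D, rank D A ≤ k

/-- the derivation has depth at least `k` -/
def depthAtLeast (D : ChaseDerivation 𝓡 F) (k : ℕ) : Prop :=
  ∃ A ∈ allAtoms D, k ≤ rank D A

/-- O-applicability of a trigger on the subderivation `D₀,…,Dᵢ`: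
its substitution is a homomorphism from the body to `Fᵢ` -/
def AppO (D : ChaseDerivation 𝓡 F) (i : ℕ) (T : Trigger) : Prop :=
  T.rule ∈ 𝓡 ∧ isHom T.π T.rule.bodySet (D.facts i)

def frontierAgree (R : XRule) (π π' : XTerm → XTerm) : Prop :=
  ∀ t ∈ R.frontier, π t = π' t

/-- SO-applicability on `D₀,…,Dᵢ`: moreover no trigger of the subderivation has the
same rule with a substitution agreeing on the frontier -/
def AppSO (D : ChaseDerivation 𝓡 F) (i : ℕ) (T : Trigger) : Prop :=
  AppO D i T ∧ ∀ j T', j ≤ i → D.tr j = some T' →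
    ¬ (T'.rule = T.rule ∧ frontierAgree T.rule T.π T'.π)

/-- R-applicability on `D₀,…,Dᵢ`: moreover `π` cannot be extended to a homomorphism
from `B ∪ H` to `Fᵢ` -/
def AppR (D : ChaseDerivation 𝓡 F) (i : ℕ) (T : Trigger) : Prop :=
  AppO D i T ∧ ¬ ∃ σ : XTerm → XTerm,
    isHom σ (T.rule.bodySet ∪ T.rule.headSet) (D.facts i) ∧
    ∀ t ∈ listVars T.rule.body, σ t = T.π t

/-- logical equivalence of two sets of atoms: each maps to the other by homomorphism -/
def logEquiv (A B : Set XAtom) : Prop := (∃ σ, isHom σ A B) ∧ (∃ σ, isHom σ B A)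

/-- E-applicability on `D₀,…,Dᵢ`: moreover `Fᵢ ∪ π^s(H)` is not logically
equivalent to `Fᵢ` -/
def AppE (D : ChaseDerivation 𝓡 F) (i : ℕ) (T : Trigger) : Prop :=
  AppO D i T ∧
  ¬ logEquiv (D.facts i ∪ applySet (safeExt T.rule T.π) T.rule.headSet) (D.facts i)

/-- an O-chase derivation is any derivation -/
def OChase (_D : ChaseDerivation 𝓡 F) : Prop := True

/-- an SO-chase derivation: every trigger is SO-applicable on the preceding
subderivation -/
def SOChase (D : ChaseDerivation 𝓡 F) : Prop := ∀ i T, D.tr (i+1) = some T → AppSO D i T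

/-- an R-chase derivation: every trigger is R-applicable on the preceding
subderivation -/
def RChase (D : ChaseDerivation 𝓡 F) : Prop := ∀ i T, D.tr (i+1) = some T → AppR D i T

/-- rank compatibility: triggers appear in order of non-decreasing rank -/
def RankCompatible (D : ChaseDerivation 𝓡 F) : Prop :=
  ∀ i j T T', D.tr i = some T → D.tr j = some T' → i ≤ j →
    trigRank D T ≤ trigRank D T'

/-- rank exhaustiveness (w.r.t. an applicability criterion `App`): for every rank
`k` of a trigger of the derivation, if `Dᵢ` is the last element whose trigger has
rank `k` then every trigger `App`-applicable on `D₀,…,Dᵢ` has rank `k+1` -/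
def RankExhaustive (App : ChaseDerivation 𝓡 F → ℕ → Trigger → Prop)
    (D : ChaseDerivation 𝓡 F) : Prop :=
  ∀ i T, D.tr i = some T →
    (∀ j T', i < j → D.tr j = some T' → trigRank D T' ≠ trigRank D T) →
    ∀ T', App D i T' → trigRank D T' = trigRank D T + 1

/-- breadth-first derivation (w.r.t. an applicability criterion) -/
def BreadthFirst (App : ChaseDerivation 𝓡 F → ℕ → Trigger → Prop)
    (D : ChaseDerivation 𝓡 F) : Prop :=
  RankCompatible D ∧ RankExhaustive App D

/-- an E-chase derivation: an E-breadth-first derivation in which every trigger is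
E-applicable on the preceding subderivation -/
def EChase (D : ChaseDerivation 𝓡 F) : Prop :=
  BreadthFirst AppE D ∧ ∀ i T, D.tr (i+1) = some T → AppE D i T

/-- exhaustiveness: for every `i` and every trigger applicable on `D₀,…,Dᵢ` there is
`k ≥ i` such that either `D_k = (R,π,F_k)` or the trigger is not applicable on
`D₀,…,D_k` -/
def Exhaustive (App : ChaseDerivation 𝓡 F → ℕ → Trigger → Prop)
    (D : ChaseDerivation 𝓡 F) : Prop :=
  ∀ i T, App D i T →
    ∃ k, i ≤ k ∧ ((∃ T', D.tr k = some T' ∧ TrigEquiv T T') ∨ ¬ App D k T)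

/-- the derivation is finite -/
def IsFiniteDeriv (D : ChaseDerivation 𝓡 F) : Prop := ∃ n, ∀ m, n ≤ m → D.tr m = none

/-- a terminating derivation: exhaustive and finite -/
def Terminating (App : ChaseDerivation 𝓡 F → ℕ → Trigger → Prop)
    (D : ChaseDerivation 𝓡 F) : Prop :=
  Exhaustive App D ∧ IsFiniteDeriv D

/-- `D'` is a subderivation of `D`: its sequence of triggers is a subsequence of
that of `D` -/
def IsSubderivation (D' : ChaseDerivation 𝓡 G) (D : ChaseDerivation 𝓡 F) : Prop :=
  ∃ φ : ℕ → ℕ, StrictMono φ ∧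
    ∀ i T, D'.tr (i+1) = some T → ∃ T', D.tr (φ i + 1) = some T' ∧ TrigEquiv T T'

/-- `D'` is the restriction of `D` induced by `G`: the maximal derivation from `G`
and `𝓡` whose sequence of triggers is a subsequence of that of `D` -/
def IsRestriction (D : ChaseDerivation 𝓡 F) (G : Set XAtom) (D' : ChaseDerivation 𝓡 G) : Prop :=
  IsSubderivation D' D ∧
  ∀ D'' : ChaseDerivation 𝓡 G, IsSubderivation D'' D → IsSubderivation D'' D'

/-- `A'` is a direct ancestor of `A` in `D`: for some element `Dᵢ = (Rᵢ,πᵢ,Fᵢ)` of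
`D`, `A' ∈ πᵢ(Bᵢ)` and `A ∈ Fᵢ \ Fᵢ₋₁` -/
def DirectAnc (D : ChaseDerivation 𝓡 F) (A' A : XAtom) : Prop :=
  ∃ i T, D.tr (i+1) = some T ∧ A' ∈ applySet T.π T.rule.bodySet ∧
    A ∈ D.facts (i+1) ∧ A ∉ D.facts i

/-- the set of ancestors of an atom: the transitive closure of the direct-ancestor
relation -/
def Anc (D : ChaseDerivation 𝓡 F) (A : XAtom) : Set XAtom :=
  {A' | Relation.TransGen (DirectAnc D) A' A}

/-- the ancestors of a trigger `(R,π)`: the atoms of `π(B)` together with the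
ancestors of these atoms -/
def TrigAnc (D : ChaseDerivation 𝓡 F) (T : Trigger) : Set XAtom :=
  applySet T.π T.rule.bodySet ∪ ⋃ A ∈ applySet T.π T.rule.bodySet, Anc D A

end Chase

open Chase

/-- the atom `p(s,t)` (with `p` the binary predicate `0`) -/
def patm (s t : XTerm) : XAtom := ⟨0, [s, t]⟩

/-- the rule `p(x,y) → ∃z (p(y,z) ∧ p(z,y))` -/
def loopRule : XRule :=
  ⟨[patm (.var 0) (.var 1)], [patm (.var 1) (.var 2), patm (.var 2) (.var 1)]⟩

section MyAux
open Chase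

variable {𝓡 : Set XRule} {F : Set XAtom}

lemma my_facts_mono (D : ChaseDerivation 𝓡 F) (i : ℕ) : D.facts i ⊆ D.facts (i+1) := by
  cases h : D.tr (i+1) with
  | none => rw [D.step_none i h]
  | some T => rw [(D.step_some i T h).2.2]; exact Set.subset_union_left

lemma my_facts_mono_le (D : ChaseDerivation 𝓡 F) {i j : ℕ} (h : i ≤ j) :
    D.facts i ⊆ D.facts j := by
  induction j with
  | zero => simp_all
  | succ j ih =>
    rcases Nat.lt_or_ge i (j+1) with h' | h'
    · exact (ih (by omega)).trans (my_facts_mono D j)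
    · have : i = j + 1 := by omega
      subst this; rfl

lemma my_v1_mem_bodyVars : XTerm.var 1 ∈ listVars loopRule.body :=
  ⟨trivial, patm (.var 0) (.var 1), by simp [loopRule], by simp [patm]⟩

lemma my_v1_mem_frontier : XTerm.var 1 ∈ loopRule.frontier :=
  ⟨my_v1_mem_bodyVars, ⟨trivial, patm (.var 1) (.var 2), by simp [loopRule], by simp [patm]⟩⟩

lemma my_v1_not_exist : XTerm.var 1 ∉ loopRule.existVars := fun h => h.2 my_v1_mem_bodyVars

lemma my_v2_mem_exist : XTerm.var 2 ∈ loopRule.existVars := by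
  constructor
  · exact ⟨trivial, patm (.var 1) (.var 2), by simp [loopRule], by simp [patm]⟩
  · rintro ⟨-, a, ha, hm⟩
    simp [loopRule] at ha
    subst ha
    simp [patm] at hm

lemma my_safeExt_v1 (π : XTerm → XTerm) : safeExt loopRule π (.var 1) = π (.var 1) := by
  unfold safeExt; rw [if_neg my_v1_not_exist]

/-- the canonical null produced by a trigger of `loopRule` -/
def myNull (x y : XTerm) : XTerm :=
  XTerm.null [(0, [.var 0, .var 1])] [(0, [.var 1, .var 2]), (0, [.var 2, .var 1])]
    (.var 2) [(.var 0, x), (.var 1, y)]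

lemma my_safeExt_v2 (π : XTerm → XTerm) :
    safeExt loopRule π (.var 2) = myNull (π (.var 0)) (π (.var 1)) := by
  unfold safeExt; rw [if_pos my_v2_mem_exist]; rfl

lemma my_sizeOf_lt (x y : XTerm) : sizeOf y < sizeOf (myNull x y) := by
  simp [myNull]; omega

/-- the substitution sending `x ↦ s`, `y ↦ t` -/
def piST (s t : XTerm) : XTerm → XTerm := fun u =>
  match u with
  | .var 0 => s
  | .var 1 => t
  | u => u

lemma my_appO (D : ChaseDerivation {loopRule} F) (k : ℕ) (s t : XTerm)
    (h : patm s t ∈ D.facts k) : AppO D k ⟨loopRule, piST s t⟩ := by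
  refine ⟨rfl, fun c => rfl, ?_⟩
  rintro A ⟨a, ha, rfl⟩
  have : a = patm (.var 0) (.var 1) := by simpa [XRule.bodySet, loopRule] using ha
  subst this
  exact h

lemma my_produced (D : ChaseDerivation {loopRule} F) (i : ℕ) (T : Trigger)
    (h : D.tr (i+1) = some T) :
    patm (T.π (.var 1)) (myNull (T.π (.var 0)) (T.π (.var 1))) ∈ D.facts (i+1) := by
  obtain ⟨hr, -, he⟩ := D.step_some i T h
  have hr' : T.rule = loopRule := hr
  rw [he]
  refine Or.inr ⟨patm (.var 1) (.var 2), ?_, ?_⟩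
  · rw [hr']; simp [XRule.headSet, loopRule]
  · rw [hr']
    show XAtom.mk 0 _ = _
    rw [show (patm (.var 1) (.var 2)).args = [.var 1, .var 2] from rfl]
    simp only [List.map, my_safeExt_v1, my_safeExt_v2]
    rfl

end MyAux
section MyAux2
open Chase

/-- the trivial derivation with no triggers -/
def trivDeriv (𝓡 : Set XRule) (F : Set XAtom) : ChaseDerivation 𝓡 F where
  tr _ := none
  facts _ := F
  tr_zero := rfl
  facts_zero := rfl
  step_some := fun _ T h => by cases h
  step_none := fun _ _ => rfl
  closed := fun _ h => absurd rfl h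
  distinct := fun _ _ _ _ h => absurd h (by simp)

lemma my_trivAppSO (F : Set XAtom) (h : patm (.const 0) (.const 1) ∈ F) (k : ℕ) :
    AppSO (trivDeriv {loopRule} F) k ⟨loopRule, piST (.const 0) (.const 1)⟩ :=
  ⟨my_appO (trivDeriv {loopRule} F) k _ _ (by exact h), fun _ _ _ hj => by cases hj⟩

/-- iterate a step function on a subtype -/
noncomputable def chainSeq {α : Type} {P : α → Prop} (f : ∀ t, P t → {t' // P t'})
    (init : {t // P t}) : ℕ → {t // P t}
  | 0 => init
  | m+1 => f (chainSeq f init m).1 (chainSeq f init m).2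

end MyAux2
/-- with `F = {p(a,b)}` (for distinct constants `a`, `b`), every
exhaustive SO-chase derivation from `F` and `{p(x,y) → ∃z (p(y,z) ∧ p(z,y))}` is
infinite; in particular this ruleset is not SO-`k`-bounded for any `k`. -/
theorem loop_rule_not_SO_bounded :
    (∀ D : ChaseDerivation {loopRule} {patm (.const 0) (.const 1)},
      SOChase D → Exhaustive AppSO D → ¬ IsFiniteDeriv D) ∧
    ∀ k : ℕ, ¬ (∀ F : Set XAtom, F.Finite →
      ∀ D : ChaseDerivation {loopRule} F, SOChase D → BreadthFirst AppSO D →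
        Terminating AppSO D ∧ depthAtMost D k) := by
  constructor
  · intro D _ hex ⟨n, hn⟩
    -- facts are eventually constant and all contained in `facts n`
    have hstable : ∀ m, D.facts (n + m) = D.facts n := by
      intro m
      induction m with
      | zero => rfl
      | succ m ih => rw [← ih]; exact D.step_none (n+m) (hn (n+m+1) (by omega))
    have hsub : ∀ j, D.facts j ⊆ D.facts n := by
      intro j
      rcases le_total j n with h | h
      · exact my_facts_mono_le D h
      · rw [show j = n + (j - n) by omega, hstable]
    have hfk : ∀ k, n ≤ k → D.facts k = D.facts n := fun k hk =>
      le_antisymm (hsub k) (my_facts_mono_le D hk)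
    -- every second argument of an atom of `facts n` is the frontier image of
    -- some trigger of the derivation
    have hA : ∀ t, (∃ s, patm s t ∈ D.facts n) →
        ∃ j T, D.tr j = some T ∧ T.π (XTerm.var 1) = t := by
      rintro t ⟨s, hst⟩
      set T : Trigger := ⟨loopRule, piST s t⟩ with hT
      have hApp : ∀ k, n ≤ k → AppO D k T := by
        intro k hk
        exact my_appO D k s t (by rw [hfk k hk]; exact hst)
      have key : ∀ k, n ≤ k → ¬ AppSO D k T →
          ∃ j T', D.tr j = some T' ∧ T'.π (XTerm.var 1) = t := by
        intro k hk hnot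
        have h2 : ¬ ∀ j T', j ≤ k → D.tr j = some T' →
            ¬ (T'.rule = T.rule ∧ frontierAgree T.rule T.π T'.π) :=
          fun h => hnot ⟨hApp k hk, h⟩
        push_neg at h2
        obtain ⟨j, T', _, hjtr, _, hfr⟩ := h2
        refine ⟨j, T', hjtr, ?_⟩
        have := hfr (XTerm.var 1) my_v1_mem_frontier
        rw [← this]; rfl
      by_cases hSO : AppSO D n T
      · obtain ⟨k, hk, hcase⟩ := hex n T hSO
        rcases hcase with ⟨T', hT', -⟩ | hnot
        · rw [hn k hk] at hT'; cases hT'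
        · exact key k hk hnot
      · exact key n le_rfl hSO
    -- every trigger of the derivation produces a new null as second argument
    have hB : ∀ j T, D.tr j = some T →
        patm (T.π (.var 1)) (myNull (T.π (.var 0)) (T.π (.var 1))) ∈ D.facts n := by
      intro j T h
      cases j with
      | zero => rw [D.tr_zero] at h; cases h
      | succ i => exact hsub (i+1) (my_produced D i T h)
    set P : XTerm → Prop := fun t => ∃ s, patm s t ∈ D.facts n with hP
    have hstep : ∀ t, P t → ∃ t', P t' ∧ sizeOf t < sizeOf t' := by
      intro t ht
      obtain ⟨j, T, hj, hv⟩ := hA t ht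
      refine ⟨myNull (T.π (.var 0)) t, ⟨T.π (.var 1), ?_⟩, my_sizeOf_lt _ _⟩
      rw [← hv]
      exact hB j T hj
    have h0 : P (XTerm.const 1) :=
      ⟨XTerm.const 0, hsub 0 (by rw [D.facts_zero]; rfl)⟩
    set f : ∀ t, P t → {t' // P t'} := fun t ht =>
      ⟨(hstep t ht).choose, (hstep t ht).choose_spec.1⟩ with hf
    set seq : ℕ → {t // P t} := chainSeq f ⟨XTerm.const 1, h0⟩ with hseq
    have hlt : ∀ m, sizeOf (seq m).1 < sizeOf (seq (m+1)).1 := by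
      intro m
      have : seq (m+1) = f (seq m).1 (seq m).2 := rfl
      rw [this]
      exact (hstep (seq m).1 (seq m).2).choose_spec.2
    have hmono : StrictMono (fun m => sizeOf (seq m).1) := strictMono_nat_of_lt_succ hlt
    have hseqinj : Function.Injective (fun m => (seq m).1) := by
      intro a b hab
      exact hmono.injective (by simp only at hab ⊢; rw [hab])
    set jf : ℕ → ℕ := fun m => (hA (seq m).1 (seq m).2).choose with hjf
    have hjspec : ∀ m, ∃ T, D.tr (jf m) = some T ∧ T.π (XTerm.var 1) = (seq m).1 :=
      fun m => (hA (seq m).1 (seq m).2).choose_spec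
    have hjinj : Function.Injective jf := by
      intro a b hab
      obtain ⟨Ta, hTa, hva⟩ := hjspec a
      obtain ⟨Tb, hTb, hvb⟩ := hjspec b
      rw [hab, hTb] at hTa
      apply hseqinj
      simp only
      injection hTa with h
      rw [← hva, ← hvb, h]
    have hjlt : ∀ m, jf m < n := by
      intro m
      by_contra h
      obtain ⟨T, hT, -⟩ := hjspec m
      rw [hn (jf m) (by omega)] at hT
      cases hT
    exact Set.infinite_range_of_injective hjinj
      ((Set.finite_Iio n).subset (by rintro - ⟨m, rfl⟩; exact hjlt m))
  · intro k h
    have hmem : patm (.const 0) (.const 1) ∈ ({patm (.const 0) (.const 1)} : Set XAtom) := rfl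
    obtain ⟨⟨hexh, -⟩, -⟩ := h {patm (.const 0) (.const 1)} (Set.finite_singleton _)
      (trivDeriv {loopRule} _) (fun _ _ h => by cases h)
      ⟨fun _ _ _ _ h => (by cases h), fun _ _ h => (by cases h)⟩
    obtain ⟨k', -, hcase⟩ := hexh 0 ⟨loopRule, piST (.const 0) (.const 1)⟩
      (my_trivAppSO _ hmem 0)
    rcases hcase with ⟨T', hT', -⟩ | hnot
    · cases hT'
    · exact hnot (my_trivAppSO _ hmem k')
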